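/- Let p be prime and let A, B be finite nonempty subsets of Z_p of cardinalities s and t. For i ≥ 1 let S_i be the set of elements of Z_p expressible in at least i ways as a+b with a ∈ A, b ∈ B. Then for every j with 1 ≤ j ≤ min(s,t), Σ_{i=1}^{j} |S_i| ≥ j · min(p, s+t−j). -/

import Mathlib

set_option linter.unusedSectionVars false

open Finset

namespace PollardAux

variable {p : ℕ} [NeZero p]

/-- number of representations of `c` as `a + b` with `a ∈ A`, `b ∈ B`. -/
def rc (A B : Finset (ZMod p)) (c : ZMod p) : ℕ :=
  (B.filter (fun b => c - b ∈ A)).card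

/-- capped representation count, summed over `ZMod p`. -/
def NN (A B : Finset (ZMod p)) (j : ℕ) : ℕ :=
  ∑ c : ZMod p, min j (rc A B c)

/-- Dyson overlap. -/
def ov (A B : Finset (ZMod p)) (e : ZMod p) : ℕ :=
  (B ∩ A.image (fun a => a - e)).card

lemma rc_le (A B : Finset (ZMod p)) (c : ZMod p) : rc A B c ≤ B.card :=
  card_le_card (filter_subset _ _)

lemma filter_eq_inter (A B : Finset (ZMod p)) (c : ZMod p) :
    B.filter (fun b => c - b ∈ A) = B ∩ A.image (fun a => c - a) := by
  ext b
  simp only [mem_filter, mem_inter, mem_image]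
  constructor
  · rintro ⟨hb, ha⟩
    exact ⟨hb, c - b, ha, by ring⟩
  · rintro ⟨hb, a, ha, rfl⟩
    refine ⟨hb, ?_⟩
    simpa [sub_sub_cancel] using ha

lemma sum_rc (A B : Finset (ZMod p)) : ∑ c : ZMod p, rc A B c = A.card * B.card := by
  unfold rc
  have h1 : ∀ c : ZMod p, (B.filter (fun b => c - b ∈ A)).card
      = ∑ b ∈ B, if c - b ∈ A then 1 else 0 := by
    intro c; rw [Finset.sum_boole]; simp
  simp_rw [h1]
  rw [Finset.sum_comm]
  have h2 : ∀ b : ZMod p, (∑ c : ZMod p, if c - b ∈ A then 1 else 0) = A.card := by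
    intro b
    rw [Finset.sum_boole]
    congr 1
    have : (univ.filter fun c : ZMod p => c - b ∈ A) = A.image (fun a => a + b) := by
      ext c
      simp only [mem_filter, mem_univ, true_and, mem_image]
      constructor
      · intro h; exact ⟨c - b, h, by ring⟩
      · rintro ⟨a, ha, rfl⟩; simpa [add_sub_cancel_right] using ha
    rw [this, card_image_of_injective _ (add_left_injective b)]
    rfl
  calc ∑ b ∈ B, ∑ c : ZMod p, (if c - b ∈ A then (1:ℕ) else 0)
      = ∑ b ∈ B, A.card := by exact Finset.sum_congr rfl (fun b _ => h2 b)
    _ = A.card * B.card := by rw [Finset.sum_const, smul_eq_mul, mul_comm]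

lemma rc_compl (A B : Finset (ZMod p)) (c : ZMod p) :
    rc A B c + rc Aᶜ B c = B.card := by
  unfold rc
  have : (B.filter fun b => c - b ∈ Aᶜ) = B.filter (fun b => ¬ (c - b ∈ A)) := by
    apply filter_congr; intro b _; simp [Finset.mem_compl]
  rw [this]
  exact Finset.card_filter_add_card_filter_not _

/-- The duality identity. -/
lemma duality (A B : Finset (ZMod p)) (j : ℕ) (hj : j ≤ B.card) :
    NN A B j + Aᶜ.card * B.card = j * p + NN Aᶜ B (B.card - j) := by
  have h1 : ∑ c : ZMod p, rc Aᶜ B c = Aᶜ.card * B.card := sum_rc _ _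
  have key : ∀ c : ZMod p,
      min j (rc A B c) + rc Aᶜ B c = j + min (B.card - j) (rc Aᶜ B c) := by
    intro c
    have h2 := rc_compl A B c
    have h3 := rc_le A B c
    omega
  calc NN A B j + Aᶜ.card * B.card
      = ∑ c : ZMod p, (min j (rc A B c) + rc Aᶜ B c) := by
        rw [Finset.sum_add_distrib, h1]; rfl
    _ = ∑ c : ZMod p, (j + min (B.card - j) (rc Aᶜ B c)) := by
        exact Finset.sum_congr rfl fun c _ => key c
    _ = j * p + NN Aᶜ B (B.card - j) := by
        rw [Finset.sum_add_distrib, Finset.sum_const, Finset.card_univ, ZMod.card,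
          smul_eq_mul, mul_comm]; rfl

/-- Dyson transform decreases representation counts pointwise. -/
lemma dyson_rc (A B : Finset (ZMod p)) (e x : ZMod p) :
    rc (A ∪ B.image (fun b => b + e)) (B ∩ A.image (fun a => a - e)) x ≤ rc A B x := by
  classical
  apply Finset.card_le_card_of_injOn (fun b => if x - b ∈ A then b else x - b - e)
  · intro b hb; simp only [mem_coe]
    simp only [mem_coe, mem_filter, mem_inter, mem_image, mem_union] at hb
    obtain ⟨⟨hbB, a, haA, hae⟩, hsum⟩ := hb
    by_cases h : x - b ∈ A
    · rw [if_pos h]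
      exact mem_filter.mpr ⟨hbB, h⟩
    · rw [if_neg h]
      rw [mem_filter]
      rcases hsum with hA | ⟨b2, hb2, hb2e⟩
      · exact absurd hA h
      · constructor
        · have hxb : x - b - e = b2 := by rw [← hb2e]; ring
          rw [hxb]; exact hb2
        · have hbe : b + e = a := by rw [← hae]; ring
          have hxx : x - (x - b - e) = b + e := by ring
          rw [hxx, hbe]; exact haA
  · intro b1 hb1 b2 hb2 heq
    simp only [coe_filter, Set.mem_setOf_eq, mem_inter, mem_image] at hb1 hb2
    obtain ⟨⟨hb1B, a1, ha1A, ha1e⟩, _⟩ := hb1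
    obtain ⟨⟨hb2B, a2, ha2A, ha2e⟩, _⟩ := hb2
    by_cases h1 : x - b1 ∈ A <;> by_cases h2 : x - b2 ∈ A <;>
      simp only [h1, h2, if_true, if_false] at heq
    · exact heq
    · exfalso
      apply h2
      have : x - b2 = b1 + e := by rw [heq]; ring
      have hb1e : b1 + e = a1 := by rw [← ha1e]; ring
      rw [this, hb1e]; exact ha1A
    · exfalso
      apply h1
      have : x - b1 = b2 + e := by rw [← heq]; ring
      have hb2e : b2 + e = a2 := by rw [← ha2e]; ring
      rw [this, hb2e]; exact ha2A
    · linear_combination -heq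

lemma NN_dyson (A B : Finset (ZMod p)) (e : ZMod p) (j : ℕ) :
    NN (A ∪ B.image (fun b => b + e)) (B ∩ A.image (fun a => a - e)) j ≤ NN A B j :=
  Finset.sum_le_sum fun c _ => min_le_min le_rfl (dyson_rc A B e c)

/-- sizes under the Dyson transform. -/
lemma dyson_card (A B : Finset (ZMod p)) (e : ZMod p) :
    (A ∪ B.image (fun b => b + e)).card + (B ∩ A.image (fun a => a - e)).card
      = A.card + B.card := by
  have h1 : (A ∪ B.image (fun b => b + e)).card + (A ∩ B.image (fun b => b + e)).card
      = A.card + (B.image (fun b => b + e)).card := Finset.card_union_add_card_inter _ _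
  have h2 : (B.image (fun b => b + e)).card = B.card :=
    card_image_of_injective _ (add_left_injective e)
  have h3 : (A ∩ B.image (fun b => b + e)).card = (B ∩ A.image (fun a => a - e)).card := by
    apply Finset.card_bij (fun z _ => z - e)
    · intro z hz
      simp only [mem_inter, mem_image] at hz ⊢
      obtain ⟨hzA, b, hbB, rfl⟩ := hz
      refine ⟨by simpa [add_sub_cancel_right] using hbB, b + e, hzA, by ring⟩
    · intro z1 hz1 z2 hz2 h
      exact sub_left_injective (G := ZMod p) h
    · intro z hz
      simp only [mem_inter, mem_image] at hz
      obtain ⟨hzB, a, haA, rfl⟩ := hz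
      refine ⟨a, ?_, by ring⟩
      simp only [mem_inter, mem_image]
      exact ⟨haA, a - e, hzB, by ring⟩
  omega

lemma ov_eq_filter (A B : Finset (ZMod p)) (e : ZMod p) :
    B ∩ A.image (fun a => a - e) = B.filter (fun b => b + e ∈ A) := by
  ext b
  simp only [mem_inter, mem_image, mem_filter]
  constructor
  · rintro ⟨hb, a, ha, rfl⟩
    refine ⟨hb, ?_⟩
    simpa [sub_add_cancel] using ha
  · rintro ⟨hb, ha⟩
    exact ⟨hb, b + e, ha, by ring⟩

lemma ov_compl (A B : Finset (ZMod p)) (e : ZMod p) :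
    ov Aᶜ B e + ov A B e = B.card := by
  unfold ov
  rw [ov_eq_filter, ov_eq_filter]
  have : (B.filter fun b => b + e ∈ Aᶜ) = B.filter (fun b => ¬ (b + e ∈ A)) := by
    apply filter_congr; intro b _; simp [Finset.mem_compl]
  rw [this]
  rw [add_comm]
  exact Finset.card_filter_add_card_filter_not _

lemma ov_le (A B : Finset (ZMod p)) (e : ZMod p) : ov A B e ≤ B.card :=
  card_le_card inter_subset_left

lemma ov_pos (A B : Finset (ZMod p)) (e b : ZMod p) (hb : b ∈ B) (hA : b + e ∈ A) :
    0 < ov A B e :=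
  card_pos.mpr ⟨b, mem_inter.mpr ⟨hb, mem_image.mpr ⟨b + e, hA, by ring⟩⟩⟩

lemma ov_full (A B : Finset (ZMod p)) (e : ZMod p) (h : ov A B e = B.card)
    (b : ZMod p) (hb : b ∈ B) : b + e ∈ A := by
  have hsub : B ⊆ A.image (fun a => a - e) := by
    have heq : B ∩ A.image (fun a => a - e) = B :=
      Finset.eq_of_subset_of_card_le inter_subset_left (le_of_eq h.symm)
    intro x hx
    rw [← heq] at hx
    exact (Finset.mem_inter.mp hx).2
  obtain ⟨a, haA, hae⟩ := mem_image.mp (hsub hb)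
  have : b + e = a := by rw [← hae]; ring
  rw [this]; exact haA

lemma pathological (hp : p.Prime) (A B : Finset (ZMod p))
    (hA : A.Nonempty) (hAc : Aᶜ.Nonempty) (hB2 : 2 ≤ B.card)
    (h : ∀ e, ov A B e = 0 ∨ ov A B e = B.card) : False := by
  haveI : Fact p.Prime := ⟨hp⟩
  obtain ⟨b, hb, b', hb', hne⟩ := Finset.one_lt_card.mp hB2
  obtain ⟨a₀, ha₀⟩ := hA
  obtain ⟨x₀, hx₀⟩ := hAc
  set d : ZMod p := b - b' with hd_def
  have hd : d ≠ 0 := sub_ne_zero.mpr hne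
  have step : ∀ e, ov A B e = B.card → ov A B (e + d) = B.card := by
    intro e he
    rcases h (e + d) with h0 | hfull
    · exfalso
      have hin : b' + (e + d) ∈ A := by
        have : b' + (e + d) = b + e := by rw [hd_def]; ring
        rw [this]
        exact ov_full A B e he b hb
      have := ov_pos A B (e + d) b' hb' hin
      omega
    · exact hfull
  have base : ov A B (a₀ - b) = B.card := by
    rcases h (a₀ - b) with h0 | hfull
    · exfalso
      have hin : b + (a₀ - b) ∈ A := by
        have : b + (a₀ - b) = a₀ := by ring
        rw [this]; exact ha₀
      have := ov_pos A B (a₀ - b) b hb hin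
      omega
    · exact hfull
  have iter : ∀ n : ℕ, ov A B (a₀ - b + (n : ZMod p) * d) = B.card := by
    intro n
    induction n with
    | zero => simpa using base
    | succ m ih =>
      have : (a₀ - b + ((m + 1 : ℕ) : ZMod p) * d) = (a₀ - b + (m : ZMod p) * d) + d := by
        push_cast; ring
      rw [this]
      exact step _ ih
  have hx : x₀ - b = a₀ - b + (((x₀ - a₀) * d⁻¹).val : ZMod p) * d := by
    have hval : ((((x₀ - a₀) * d⁻¹).val : ℕ) : ZMod p) = (x₀ - a₀) * d⁻¹ := by
      simp [ZMod.natCast_val, ZMod.cast_id]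
    rw [hval, mul_assoc, inv_mul_cancel₀ hd, mul_one]
    ring
  have hfull : ov A B (x₀ - b) = B.card := by rw [hx]; exact iter _
  have hmem : b + (x₀ - b) ∈ A := ov_full A B _ hfull b hb
  have hx₀A : x₀ ∈ A := by
    have hxx : b + (x₀ - b) = x₀ := by ring
    rwa [hxx] at hmem
  exact (Finset.mem_compl.mp hx₀) hx₀A

/-- Pollard's theorem, internal version; strong induction on `B.card`. -/
lemma pollard_aux (hp : p.Prime) :
    ∀ (n : ℕ) (A B : Finset (ZMod p)) (j : ℕ), B.card ≤ n →
      1 ≤ j → j ≤ A.card → j ≤ B.card →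
      j * min p (A.card + B.card - j) ≤ NN A B j := by
  intro n
  induction n with
  | zero => intro A B j h0 h1 _ h3; omega
  | succ n IH =>
    intro A B j hBn hj1 hjA hjB
    by_cases hBn' : B.card ≤ n
    · exact IH A B j hBn' hj1 hjA hjB
    have htn : B.card = n + 1 := by omega
    set s := A.card with hs
    set t := B.card with ht
    -- Base 1 : j = t
    by_cases hjt : j = t
    · have hrc : ∀ c : ZMod p, min j (rc A B c) = rc A B c := fun c =>
        min_eq_right (hjt ▸ rc_le A B c)
      have hNN : NN A B j = s * t := by
        unfold NN
        rw [Finset.sum_congr rfl fun c _ => hrc c]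
        exact sum_rc A B
      rw [hNN]
      have h1 : min p (s + t - j) ≤ s := by
        have : s + t - j = s := by omega
        rw [this]; exact min_le_right _ _
      calc j * min p (s + t - j) ≤ j * s := Nat.mul_le_mul_left _ h1
        _ = s * t := by rw [hjt, mul_comm]
    -- Base 2 : saturated
    by_cases hsat : p ≤ s + t - j
    · have hrc : ∀ c : ZMod p, j ≤ rc A B c := by
        intro c
        unfold rc
        rw [filter_eq_inter]
        have h1 : (B ∩ A.image (fun a => c - a)).card + (B ∪ A.image (fun a => c - a)).card
            = t + (A.image (fun a => c - a)).card := Finset.card_inter_add_card_union _ _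
        have h2 : (A.image (fun a => c - a)).card = s := by
          apply card_image_of_injective
          intro x y hxy
          have : c - x = c - y := hxy
          linear_combination -this
        have h3 : (B ∪ A.image (fun a => c - a)).card ≤ p := by
          have := Finset.card_le_univ (B ∪ A.image (fun a => c - a))
          rwa [ZMod.card] at this
        omega
      have hNN : NN A B j = p * j := by
        unfold NN
        rw [Finset.sum_congr rfl fun c _ => min_eq_left (hrc c)]
        rw [Finset.sum_const, Finset.card_univ, ZMod.card, smul_eq_mul]
      rw [hNN]
      calc j * min p (s + t - j) ≤ j * p := Nat.mul_le_mul_left _ (min_le_left _ _)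
        _ = p * j := mul_comm _ _
    -- Main case
    push_neg at hsat
    have hjt' : j < t := lt_of_le_of_ne hjB hjt
    have hsp : s < p := by omega
    have hmin : min p (s + t - j) = s + t - j := min_eq_right (le_of_lt hsat)
    rw [hmin]
    by_cases hpath : ∀ e, ov A B e = 0 ∨ ov A B e = B.card
    · exfalso
      apply pathological hp A B
      · exact card_pos.mp (by omega)
      · apply card_pos.mp
        rw [Finset.card_compl, ZMod.card]
        omega
      · omega
      · exact hpath
    push_neg at hpath
    obtain ⟨e, he0, het⟩ := hpath
    have hov_le := ov_le A B e
    have hov1 : 1 ≤ ov A B e := by omega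
    have hovt : ov A B e < t := lt_of_le_of_ne hov_le het
    by_cases hjo : j ≤ ov A B e
    · -- primal Dyson
      set A' := A ∪ B.image (fun b => b + e) with hA'
      set B' := B ∩ A.image (fun a => a - e) with hB'
      have hcard : A'.card + B'.card = s + t := dyson_card A B e
      have hB'c : B'.card = ov A B e := rfl
      have hIH := IH A' B' j (by omega) hj1
        (le_trans hjA (card_le_card subset_union_left)) (by omega)
      have hminA : min p (A'.card + B'.card - j) = min p (s + t - j) := by rw [hcard]
      calc j * (s + t - j) = j * min p (s + t - j) := by rw [hmin]
        _ = j * min p (A'.card + B'.card - j) := by rw [hminA]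
        _ ≤ NN A' B' j := hIH
        _ ≤ NN A B j := NN_dyson A B e j
    · -- dual Dyson
      push_neg at hjo
      set X := Aᶜ with hX
      have hXcard : X.card = p - s := by
        rw [hX, Finset.card_compl, ZMod.card]
      set X' := X ∪ B.image (fun b => b + e) with hX'
      set Y' := B ∩ X.image (fun a => a - e) with hY'
      have hYc : Y'.card + ov A B e = t := by
        have := ov_compl A B e
        exact this
      have hcard : X'.card + Y'.card = (p - s) + t := by
        have hdc := dyson_card X B e
        rw [← hX', ← hY'] at hdc
        omega
      have hIH := IH X' Y' (t - j) (by omega) (by omega)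
        (by
          have : t - j < p - s := by omega
          have h2 : X.card ≤ X'.card := card_le_card subset_union_left
          omega)
        (by omega)
      have hminX : min p (X'.card + Y'.card - (t - j)) = (p - s) + j := by
        have h1 : X'.card + Y'.card - (t - j) = (p - s) + j := by omega
        rw [h1]
        exact min_eq_right (by omega)
      rw [hminX] at hIH
      have hdys : NN X' Y' (t - j) ≤ NN X B (t - j) := NN_dyson X B e (t - j)
      have hdual : NN A B j + (p - s) * t = j * p + NN X B (t - j) := by
        have hddd := duality A B j hjB
        rw [← hX] at hddd
        rw [hXcard, ← ht] at hddd
        exact hddd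
      -- arithmetic
      obtain ⟨u, hu⟩ : ∃ u, t = j + u := ⟨t - j, by omega⟩
      obtain ⟨v, hv⟩ : ∃ v, p = s + v := ⟨p - s, by omega⟩
      have hvps : p - s = v := by omega
      have hutj : t - j = u := by omega
      have hstj : s + t - j = s + u := by omega
      have hring : j * (s + u) + v * (j + u) = j * (s + v) + u * (v + j) := by ring
      have hfin : j * (s + u) + v * t ≤ NN A B j + v * t := by
        calc j * (s + u) + v * t = j * (s + u) + v * (j + u) := by rw [hu]
          _ = j * (s + v) + u * (v + j) := hring
          _ ≤ j * (s + v) + NN X B (t - j) := by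
              have h2 : u * (v + j) ≤ NN X B (t - j) := by
                have h4 : u * (v + j) = (t - j) * ((p - s) + j) := by rw [hutj, hvps]
                rw [h4]
                exact le_trans hIH hdys
              exact Nat.add_le_add_left h2 _
          _ = j * p + NN X B (t - j) := by
              have hjp : j * (s + v) = j * p := by rw [← hv]
              rw [hjp]
          _ = NN A B j + (p - s) * t := hdual.symm
          _ = NN A B j + v * t := by rw [hvps]
      rw [hstj]
      exact le_of_add_le_add_right hfin

lemma prod_card (A B : Finset (ZMod p)) (c : ZMod p) :
    ((A ×ˢ B).filter (fun x => x.1 + x.2 = c)).card = rc A B c := by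
  unfold rc
  apply Finset.card_bij' (fun x _ => x.2) (fun b _ => (c - b, b))
  · intro x hx
    simp only [mem_filter, mem_product] at hx ⊢
    obtain ⟨⟨hx1, hx2⟩, hsum⟩ := hx
    refine ⟨hx2, ?_⟩
    have : c - x.2 = x.1 := by rw [← hsum]; ring
    rw [this]; exact hx1
  · intro b hb
    simp only [mem_filter, mem_product] at hb ⊢
    exact ⟨⟨hb.2, hb.1⟩, by ring⟩
  · intro x hx
    simp only [mem_filter, mem_product] at hx
    obtain ⟨⟨hx1, hx2⟩, hsum⟩ := hx
    have : c - x.2 = x.1 := by rw [← hsum]; ring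
    rw [Prod.ext_iff]
    exact ⟨this, rfl⟩
  · intro b hb
    rfl

lemma icc_filter_min (j r : ℕ) : ((Icc 1 j).filter (fun i => i ≤ r)) = Icc 1 (min j r) := by
  ext i
  simp only [mem_filter, mem_Icc]
  omega

lemma sum_card_eq_NN (A B : Finset (ZMod p)) (j : ℕ) :
    ∑ i ∈ Icc 1 j, (univ.filter (fun c : ZMod p => i ≤ rc A B c)).card = NN A B j := by
  have h1 : ∀ i, (univ.filter (fun c : ZMod p => i ≤ rc A B c)).card
      = ∑ c : ZMod p, if i ≤ rc A B c then 1 else 0 := by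
    intro i; rw [Finset.sum_boole]; simp
  simp_rw [h1]
  rw [Finset.sum_comm]
  unfold NN
  apply Finset.sum_congr rfl
  intro c _
  rw [Finset.sum_boole]
  have h2 : ((Icc 1 j).filter (fun i => i ≤ rc A B c)) = Icc 1 (min j (rc A B c)) :=
    icc_filter_min _ _
  rw [h2]
  simp [Nat.card_Icc]


end PollardAux

open Finset PollardAux in
/-- Pollard's generalization of the Cauchy–Davenport Theorem. -/
theorem stmt_3 {p : ℕ} [NeZero p] (hp : p.Prime) (A B : Finset (ZMod p))
    (hA : A.Nonempty) (hB : B.Nonempty) (j : ℕ) (hj1 : 1 ≤ j)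
    (hj2 : j ≤ min A.card B.card) :
    j * min p (A.card + B.card - j)
      ≤ ∑ i ∈ Finset.Icc 1 j,
          (Finset.univ.filter
            (fun c : ZMod p => i ≤ ((A ×ˢ B).filter (fun x => x.1 + x.2 = c)).card)).card := by
  have hkey : ∀ i : ℕ, (Finset.univ.filter
      (fun c : ZMod p => i ≤ ((A ×ˢ B).filter (fun x => x.1 + x.2 = c)).card))
      = (Finset.univ.filter (fun c : ZMod p => i ≤ rc A B c)) := by
    intro i
    apply Finset.filter_congr
    intro c _
    rw [prod_card A B c]
  calc j * min p (A.card + B.card - j)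
      ≤ NN A B j := pollard_aux hp B.card A B j le_rfl hj1
        (le_trans hj2 (min_le_left _ _)) (le_trans hj2 (min_le_right _ _))
    _ = ∑ i ∈ Finset.Icc 1 j, (Finset.univ.filter (fun c : ZMod p => i ≤ rc A B c)).card :=
        (sum_card_eq_NN A B j).symm
    _ = _ := by
        apply Finset.sum_congr rfl
        intro i _
        rw [hkey i]
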